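/- arXiv:2006.15225 — 2 statements merged into one kernel-verified Lean document; each statement's English description precedes it below -/
import Mathlib

section
/- Let n ≥ 4 be even, let m ≥ 1, let x¹,…,xⁿ ∈ ℝ^m, and set d_{ij} = ‖xⁱ − xʲ‖²₂. Suppose that for every l ∈ {1,2} and all distinct i, j ∈ C_l one has (2/n)∑_{k∈[n]∖C_l} min{d_{ik} + d^in_j, d_{jk} + d^in_i} − d_{ij} ≥ η. Then the planted ratio-cut matrix X̄ is an optimal solution of LP2, i.e., ∑_{i,j∈[n]} d_{ij} X̄_{ij} ≤ ∑_{i,j∈[n]} d_{ij} X_{ij} for every matrix X in the feasible region of LP2. -/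
/-- First planted cluster: `C₁ = {1, …, n/2}` (as indices `i` with `i < n/2`). -/
def Cone (n : ℕ) : Finset (Fin n) := Finset.univ.filter fun i => (i : ℕ) < n / 2

/-- Second planted cluster: `C₂ = {n/2 + 1, …, n}`. -/
def Ctwo (n : ℕ) : Finset (Fin n) := Finset.univ.filter fun i => n / 2 ≤ (i : ℕ)

/-- `d^in_i = (2/n) ∑_{j ∈ C_l} d_{ij}` for `i ∈ C_l`. -/
noncomputable def din (n : ℕ) (d : Fin n → Fin n → ℝ) (i : Fin n) : ℝ :=
  if (i : ℕ) < n / 2 then (2 / (n : ℝ)) * ∑ j ∈ Cone n, d i j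
  else (2 / (n : ℝ)) * ∑ j ∈ Ctwo n, d i j

/-- `η = ½ ((2/n) ∑_{i ∈ C₁} d^in_i + (2/n) ∑_{i ∈ C₂} d^in_i)`. -/
noncomputable def etaConst (n : ℕ) (d : Fin n → Fin n → ℝ) : ℝ :=
  (1 / 2) * ((2 / (n : ℝ)) * ∑ i ∈ Cone n, din n d i +
    (2 / (n : ℝ)) * ∑ i ∈ Ctwo n, din n d i)

/-- Feasible region of the LP relaxation (LP2): symmetric `X` with `Tr X = 2`, unit
row sums, and the generalized triangle inequalities. -/
def LP2Feasible (n : ℕ) (X : Fin n → Fin n → ℝ) : Prop :=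
  (∀ i j, X i j = X j i) ∧ (∑ i, X i i = 2) ∧ (∀ i, ∑ j, X i j = 1) ∧
    ∀ i j k : Fin n, i ≠ j → i ≠ k → j ≠ k → X i j + X i k ≤ X i i + X j k

/-- The planted ratio-cut matrix: `X̄_{ij} = 2/n` if `i, j` lie in the same planted
cluster (including `i = j`) and `0` otherwise. -/
noncomputable def plantedX (n : ℕ) : Fin n → Fin n → ℝ := fun i j =>
  if ((i : ℕ) < n / 2 ↔ (j : ℕ) < n / 2) then 2 / (n : ℝ) else 0

namespace Stmt11Aux
open Finset


lemma mem_Cone {n : ℕ} {i : Fin n} : i ∈ Cone n ↔ (i : ℕ) < n / 2 := by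
  simp [Cone]

lemma mem_Ctwo {n : ℕ} {i : Fin n} : i ∈ Ctwo n ↔ n / 2 ≤ (i : ℕ) := by
  simp [Ctwo]

lemma cone_ctwo_disjoint (n : ℕ) : Disjoint (Cone n) (Ctwo n) := by
  rw [Finset.disjoint_left]
  intro i hi hi2
  rw [mem_Cone] at hi
  rw [mem_Ctwo] at hi2
  omega

lemma cone_ctwo_union (n : ℕ) : Cone n ∪ Ctwo n = Finset.univ := by
  ext i
  simp only [Finset.mem_union, mem_Cone, mem_Ctwo, Finset.mem_univ, iff_true]
  omega

lemma cone_card (n : ℕ) : (Cone n).card = n / 2 := by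
  have h : Cone n = Finset.map (Fin.castLEEmb (Nat.div_le_self n 2)) Finset.univ := by
    ext i
    simp only [mem_Cone, Finset.mem_map, Finset.mem_univ, true_and, Fin.castLEEmb_apply]
    constructor
    · intro hi
      exact ⟨⟨(i : ℕ), hi⟩, by apply Fin.ext; rfl⟩
    · rintro ⟨a, rfl⟩
      exact a.2
  rw [h, Finset.card_map, Finset.card_univ, Fintype.card_fin]

lemma ctwo_card (n : ℕ) : (Ctwo n).card = n - n / 2 := by
  have h1 : (Cone n).card + (Ctwo n).card = n := by
    rw [← Finset.card_union_of_disjoint (cone_ctwo_disjoint n), cone_ctwo_union,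
      Finset.card_univ, Fintype.card_fin]
  have h2 := cone_card n
  omega



noncomputable def dInB (n : ℕ) (d : Fin n → Fin n → ℝ) (S : Finset (Fin n)) (i : Fin n) : ℝ :=
  (2 / (n : ℝ)) * ∑ j ∈ S, d i j

noncomputable def smB (n : ℕ) (d : Fin n → Fin n → ℝ) (S T : Finset (Fin n)) (e : ℝ)
    (p r : Fin n) : ℝ :=
  (2 / (n : ℝ)) * ∑ k ∈ T, min (d p k + dInB n d S r) (d r k + dInB n d S p) - e - d p r

noncomputable def lamB (n : ℕ) (d : Fin n → Fin n → ℝ) (S T : Finset (Fin n)) (e : ℝ)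
    (p r k : Fin n) : ℝ :=
  (2 / (n : ℝ)) * (max 0 (d r k + dInB n d S p - d p k - dInB n d S r) + smB n d S T e p r)

lemma max0_add_min (a b : ℝ) : max 0 (b - a) + min a b = b := by
  rcases le_total a b with h | h
  · rw [max_eq_right (by linarith), min_eq_left h]; ring
  · rw [max_eq_left (by linarith), min_eq_right h]; ring

lemma max0_sub_max0 (x : ℝ) : max 0 x - max 0 (-x) = x := by
  rcases le_total 0 x with h | h
  · rw [max_eq_right h, max_eq_left (by linarith)]; ring
  · rw [max_eq_left h, max_eq_right (by linarith)]; ring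

lemma smB_symm (n : ℕ) (d : Fin n → Fin n → ℝ) (S T : Finset (Fin n)) (e : ℝ)
    (hsym : ∀ a b, d a b = d b a) (p r : Fin n) :
    smB n d S T e p r = smB n d S T e r p := by
  unfold smB
  rw [hsym p r]
  have : ∑ k ∈ T, min (d p k + dInB n d S r) (d r k + dInB n d S p)
      = ∑ k ∈ T, min (d r k + dInB n d S p) (d p k + dInB n d S r) :=
    Finset.sum_congr rfl fun k _ => min_comm _ _
  rw [this]

lemma sum_lamB (n : ℕ) (d : Fin n → Fin n → ℝ) (S T : Finset (Fin n)) (e : ℝ) (p r : Fin n)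
    (hT : (2 / (n : ℝ)) * T.card = 1) :
    ∑ k ∈ T, lamB n d S T e p r k = dInB n d T r + dInB n d S p - e - d p r := by
  unfold lamB
  rw [← Finset.mul_sum]
  have h1 : ∑ k ∈ T, (max 0 (d r k + dInB n d S p - d p k - dInB n d S r) + smB n d S T e p r)
      = (∑ k ∈ T, d r k) + (T.card : ℝ) * dInB n d S p
        - (∑ k ∈ T, min (d p k + dInB n d S r) (d r k + dInB n d S p))
        + (T.card : ℝ) * smB n d S T e p r := by
    rw [Finset.sum_add_distrib, Finset.sum_const, nsmul_eq_mul]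
    have h2 : ∑ k ∈ T, max 0 (d r k + dInB n d S p - d p k - dInB n d S r)
        = ∑ k ∈ T, ((d r k + dInB n d S p) - min (d p k + dInB n d S r) (d r k + dInB n d S p)) := by
      refine Finset.sum_congr rfl fun k _ => ?_
      have harg : d r k + dInB n d S p - d p k - dInB n d S r
          = (d r k + dInB n d S p) - (d p k + dInB n d S r) := by ring
      rw [harg]
      have := max0_add_min (d p k + dInB n d S r) (d r k + dInB n d S p)
      linarith
    rw [h2, Finset.sum_sub_distrib, Finset.sum_add_distrib, Finset.sum_const, nsmul_eq_mul]
  rw [h1]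
  have hsm : smB n d S T e p r
      = (2 / (n : ℝ)) * ∑ k ∈ T, min (d p k + dInB n d S r) (d r k + dInB n d S p) - e - d p r := rfl
  have hdT : dInB n d T r = (2 / (n : ℝ)) * ∑ k ∈ T, d r k := rfl
  rw [hsm, hdT]
  linear_combination (dInB n d S p + (2 / (n : ℝ)) * (∑ k ∈ T, min (d p k + dInB n d S r) (d r k + dInB n d S p)) - e - d p r) * hT

lemma lamB_diff (n : ℕ) (d : Fin n → Fin n → ℝ) (S T : Finset (Fin n)) (e : ℝ)
    (hsym : ∀ a b, d a b = d b a) (p r k : Fin n) :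
    lamB n d S T e p r k - lamB n d S T e r p k
      = (2 / (n : ℝ)) * (d r k + dInB n d S p - d p k - dInB n d S r) := by
  unfold lamB
  rw [smB_symm n d S T e hsym r p]
  have h := max0_sub_max0 (d r k + dInB n d S p - d p k - dInB n d S r)
  have harg : -(d r k + dInB n d S p - d p k - dInB n d S r)
      = d p k + dInB n d S r - d r k - dInB n d S p := by ring
  rw [harg] at h
  linear_combination (2 / (n : ℝ)) * h

lemma lamB_nonneg (n : ℕ) (d : Fin n → Fin n → ℝ) (S T : Finset (Fin n)) (e : ℝ)
    (p r k : Fin n) (h : 0 ≤ smB n d S T e p r) :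
    0 ≤ lamB n d S T e p r k := by
  unfold lamB
  have h2 : (0:ℝ) ≤ 2 / (n : ℝ) := by positivity
  refine mul_nonneg h2 (add_nonneg (le_max_left _ _) h)

lemma blockPhi (n : ℕ) (d X : Fin n → Fin n → ℝ) (S T : Finset (Fin n)) (e : ℝ)
    (hsym : ∀ a b, d a b = d b a) (hT : (2 / (n : ℝ)) * T.card = 1) :
    ∑ p ∈ S, ∑ r ∈ S, ∑ k ∈ T, lamB n d S T e p r k * (X p p + X r k - X p r - X p k)
    = ∑ p ∈ S, ∑ r ∈ S, (dInB n d T r + dInB n d S p - e - d p r) * (X p p - X p r)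
      + ∑ p ∈ S, ∑ k ∈ T, ((2 / (n : ℝ)) * ∑ r ∈ S, (d p k + dInB n d S r - d r k - dInB n d S p)) * X p k := by
  have e1 : ∑ p ∈ S, ∑ r ∈ S, ∑ k ∈ T, lamB n d S T e p r k * (X p p + X r k - X p r - X p k)
      = (∑ p ∈ S, ∑ r ∈ S, ∑ k ∈ T, lamB n d S T e p r k * (X p p - X p r))
        + ((∑ p ∈ S, ∑ r ∈ S, ∑ k ∈ T, lamB n d S T e p r k * X r k)
          - (∑ p ∈ S, ∑ r ∈ S, ∑ k ∈ T, lamB n d S T e p r k * X p k)) := by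
    rw [← Finset.sum_sub_distrib, ← Finset.sum_add_distrib]
    refine Finset.sum_congr rfl fun p _ => ?_
    rw [← Finset.sum_sub_distrib, ← Finset.sum_add_distrib]
    refine Finset.sum_congr rfl fun r _ => ?_
    rw [← Finset.sum_sub_distrib, ← Finset.sum_add_distrib]
    exact Finset.sum_congr rfl fun k _ => by ring
  rw [e1]
  have e2 : ∑ p ∈ S, ∑ r ∈ S, ∑ k ∈ T, lamB n d S T e p r k * (X p p - X p r)
      = ∑ p ∈ S, ∑ r ∈ S, (dInB n d T r + dInB n d S p - e - d p r) * (X p p - X p r) := by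
    refine Finset.sum_congr rfl fun p _ => Finset.sum_congr rfl fun r _ => ?_
    rw [← Finset.sum_mul, sum_lamB n d S T e p r hT]
  have e3 : ∑ p ∈ S, ∑ r ∈ S, ∑ k ∈ T, lamB n d S T e p r k * X r k
      = ∑ p ∈ S, ∑ r ∈ S, ∑ k ∈ T, lamB n d S T e r p k * X p k := by
    exact Finset.sum_comm
  have e4 : (∑ p ∈ S, ∑ r ∈ S, ∑ k ∈ T, lamB n d S T e r p k * X p k)
        - (∑ p ∈ S, ∑ r ∈ S, ∑ k ∈ T, lamB n d S T e p r k * X p k)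
      = ∑ p ∈ S, ∑ k ∈ T, ((2 / (n : ℝ)) * ∑ r ∈ S, (d p k + dInB n d S r - d r k - dInB n d S p)) * X p k := by
    rw [← Finset.sum_sub_distrib]
    refine Finset.sum_congr rfl fun p _ => ?_
    rw [← Finset.sum_sub_distrib]
    have h1 : ∑ r ∈ S, (∑ k ∈ T, lamB n d S T e r p k * X p k - ∑ k ∈ T, lamB n d S T e p r k * X p k)
        = ∑ r ∈ S, ∑ k ∈ T, (lamB n d S T e r p k - lamB n d S T e p r k) * X p k := by
      refine Finset.sum_congr rfl fun r _ => ?_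
      rw [← Finset.sum_sub_distrib]
      exact Finset.sum_congr rfl fun k _ => by ring
    rw [h1, Finset.sum_comm]
    refine Finset.sum_congr rfl fun k _ => ?_
    rw [← Finset.sum_mul]
    congr 1
    rw [Finset.mul_sum]
    exact Finset.sum_congr rfl fun r _ => lamB_diff n d S T e hsym r p k
  rw [e2, e3, e4]
lemma grand (n : ℕ) (d X : Fin n → Fin n → ℝ) (S T : Finset (Fin n)) (e : ℝ)
    (hsym : ∀ a b, d a b = d b a) (hXs : ∀ a b, X a b = X b a)
    (hdisj : Disjoint S T) (hunion : S ∪ T = Finset.univ)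
    (hS : (2 / (n : ℝ)) * S.card = 1) (hT : (2 / (n : ℝ)) * T.card = 1)
    (hn : (n : ℝ) ≠ 0)
    (he : (n : ℝ) * e = (∑ i ∈ S, dInB n d S i) + ∑ i ∈ T, dInB n d T i)
    (htr : ∑ i, X i i = 2) (hrow : ∀ i, ∑ j, X i j = 1) :
    ∑ i, ∑ j, d i j * X i j
      = (n : ℝ) * e
        + ∑ p ∈ S, ∑ r ∈ S, ∑ k ∈ T, lamB n d S T e p r k * (X p p + X r k - X p r - X p k)
        + ∑ p ∈ T, ∑ r ∈ T, ∑ k ∈ S, lamB n d T S e p r k * (X p p + X r k - X p r - X p k) := by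
  have h22 : (n : ℝ) / 2 * (2 / (n : ℝ)) = 1 := by field_simp
  have hcS : ((S.card : ℕ) : ℝ) = (n : ℝ) / 2 := by
    have h := hS
    field_simp at h
    linarith
  have hcT : ((T.card : ℕ) : ℝ) = (n : ℝ) / 2 := by
    have h := hT
    field_simp at h
    linarith
  have hsumd : ∀ (W : Finset (Fin n)) (p : Fin n),
      ∑ j ∈ W, d p j = (n : ℝ) / 2 * dInB n d W p := by
    intro W p
    unfold dInB
    rw [← mul_assoc, h22, one_mul]
  have hsumdc : ∀ (W : Finset (Fin n)) (k : Fin n),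
      ∑ r ∈ W, d r k = (n : ℝ) / 2 * dInB n d W k := by
    intro W k
    rw [Finset.sum_congr rfl fun r _ => hsym r k, hsumd]
  have hrs : ∀ i, (∑ j ∈ S, X i j) + (∑ j ∈ T, X i j) = 1 := by
    intro i
    rw [← Finset.sum_union hdisj, hunion]
    exact hrow i
  have hcolrow : ∀ (W : Finset (Fin n)) (j : Fin n), ∑ i ∈ W, X i j = ∑ i ∈ W, X j i :=
    fun W j => Finset.sum_congr rfl fun i _ => hXs i j
  have hcs : ∀ j, (∑ i ∈ S, X i j) + (∑ i ∈ T, X i j) = 1 := by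
    intro j
    rw [hcolrow S j, hcolrow T j]
    exact hrs j
  have htr2 : (∑ p ∈ S, X p p) + (∑ p ∈ T, X p p) = 2 := by
    rw [← Finset.sum_union hdisj, hunion]
    exact htr
  -- row/column mass relations
  have ha : (∑ p ∈ S, dInB n d S p * ∑ r ∈ S, X p r)
      + (∑ p ∈ S, dInB n d S p * ∑ k ∈ T, X p k) = ∑ i ∈ S, dInB n d S i := by
    rw [← Finset.sum_add_distrib]
    refine Finset.sum_congr rfl fun p _ => ?_
    rw [← mul_add, hrs p, mul_one]
  have hb : (∑ p ∈ T, dInB n d T p * ∑ r ∈ T, X p r)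
      + (∑ p ∈ T, dInB n d T p * ∑ k ∈ S, X p k) = ∑ i ∈ T, dInB n d T i := by
    rw [← Finset.sum_add_distrib]
    refine Finset.sum_congr rfl fun p _ => ?_
    rw [← mul_add, add_comm (∑ j ∈ T, X p j), hrs p, mul_one]
  have hcc : (∑ r ∈ S, dInB n d T r * ∑ p ∈ S, X p r)
      + (∑ r ∈ S, dInB n d T r * ∑ p ∈ T, X p r) = ∑ r ∈ S, dInB n d T r := by
    rw [← Finset.sum_add_distrib]
    refine Finset.sum_congr rfl fun r _ => ?_
    rw [← mul_add, hcs r, mul_one]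
  have hdd : (∑ k ∈ T, dInB n d S k * ∑ p ∈ S, X p k)
      + (∑ k ∈ T, dInB n d S k * ∑ p ∈ T, X p k) = ∑ k ∈ T, dInB n d S k := by
    rw [← Finset.sum_add_distrib]
    refine Finset.sum_congr rfl fun r _ => ?_
    rw [← mul_add, hcs r, mul_one]
  have hDo : (∑ r ∈ S, dInB n d T r) = ∑ r ∈ T, dInB n d S r := by
    unfold dInB
    rw [← Finset.mul_sum, ← Finset.mul_sum]
    congr 1
    rw [Finset.sum_comm]
    exact Finset.sum_congr rfl fun k _ => Finset.sum_congr rfl fun r _ => hsym r k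
  have hrho : (∑ p ∈ S, ∑ k ∈ T, X p k) = ∑ p ∈ T, ∑ k ∈ S, X p k := by
    rw [Finset.sum_comm]
    exact Finset.sum_congr rfl fun k _ => Finset.sum_congr rfl fun p _ => hXs p k
  have hRS : (∑ p ∈ S, ∑ r ∈ S, X p r) = (n : ℝ) / 2 - ∑ p ∈ S, ∑ k ∈ T, X p k := by
    have h1 : ∀ p ∈ S, ∑ r ∈ S, X p r = 1 - ∑ k ∈ T, X p k := fun p _ => by linarith [hrs p]
    rw [Finset.sum_congr rfl h1, Finset.sum_sub_distrib, Finset.sum_const, nsmul_eq_mul,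
      mul_one, hcS]
  have hRT : (∑ p ∈ T, ∑ r ∈ T, X p r) = (n : ℝ) / 2 - ∑ p ∈ T, ∑ k ∈ S, X p k := by
    have h1 : ∀ p ∈ T, ∑ r ∈ T, X p r = 1 - ∑ k ∈ S, X p k := fun p _ => by linarith [hrs p]
    rw [Finset.sum_congr rfl h1, Finset.sum_sub_distrib, Finset.sum_const, nsmul_eq_mul,
      mul_one, hcT]
  -- objective split
  have hobj : ∑ i, ∑ j, d i j * X i j
      = ((∑ p ∈ S, ∑ r ∈ S, d p r * X p r) + ∑ p ∈ S, ∑ k ∈ T, d p k * X p k)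
        + ((∑ p ∈ T, ∑ k ∈ S, d p k * X p k) + ∑ p ∈ T, ∑ r ∈ T, d p r * X p r) := by
    have hin : ∀ i : Fin n, ∑ j, d i j * X i j
        = (∑ j ∈ S, d i j * X i j) + ∑ j ∈ T, d i j * X i j := by
      intro i
      rw [← Finset.sum_union hdisj, hunion]
    calc ∑ i, ∑ j, d i j * X i j
        = ∑ i, ((∑ j ∈ S, d i j * X i j) + ∑ j ∈ T, d i j * X i j) :=
          Finset.sum_congr rfl fun i _ => hin i
      _ = (∑ i ∈ S, ((∑ j ∈ S, d i j * X i j) + ∑ j ∈ T, d i j * X i j))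
          + ∑ i ∈ T, ((∑ j ∈ S, d i j * X i j) + ∑ j ∈ T, d i j * X i j) := by
          rw [← Finset.sum_union hdisj, hunion]
      _ = _ := by
          rw [Finset.sum_add_distrib, Finset.sum_add_distrib]
  -- block P1 reductions
  have hP1 : ∀ (U V : Finset (Fin n)),
      ((U.card : ℝ) = (n : ℝ) / 2) →
      ∑ p ∈ U, ∑ r ∈ U, (dInB n d V r + dInB n d U p - e - d p r) * (X p p - X p r)
      = ((∑ r ∈ U, dInB n d V r) - (n : ℝ) / 2 * e) * (∑ p ∈ U, X p p)
        - (∑ r ∈ U, dInB n d V r * ∑ p ∈ U, X p r)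
        - (∑ p ∈ U, dInB n d U p * ∑ r ∈ U, X p r)
        + e * (∑ p ∈ U, ∑ r ∈ U, X p r)
        + (∑ p ∈ U, ∑ r ∈ U, d p r * X p r) := by
    intro U V hcU
    have hA : ∀ p : Fin n, ∑ r ∈ U, (dInB n d V r + dInB n d U p - e - d p r)
        = (∑ r ∈ U, dInB n d V r) - (n : ℝ) / 2 * e := by
      intro p
      rw [Finset.sum_sub_distrib, Finset.sum_sub_distrib, Finset.sum_add_distrib,
        Finset.sum_const, Finset.sum_const, nsmul_eq_mul, nsmul_eq_mul, hsumd U p, hcU]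
      ring
    have h0 : ∀ p ∈ U, ∑ r ∈ U, (dInB n d V r + dInB n d U p - e - d p r) * (X p p - X p r)
        = ((∑ r ∈ U, dInB n d V r) - (n : ℝ) / 2 * e) * X p p
          - (∑ r ∈ U, dInB n d V r * X p r)
          - dInB n d U p * (∑ r ∈ U, X p r)
          + e * (∑ r ∈ U, X p r)
          + (∑ r ∈ U, d p r * X p r) := by
      intro p _
      have h1 : ∑ r ∈ U, (dInB n d V r + dInB n d U p - e - d p r) * (X p p - X p r)
          = (∑ r ∈ U, (dInB n d V r + dInB n d U p - e - d p r)) * X p p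
            - ∑ r ∈ U, (dInB n d V r * X p r + dInB n d U p * X p r
                - e * X p r - d p r * X p r) := by
        rw [Finset.sum_mul, ← Finset.sum_sub_distrib]
        exact Finset.sum_congr rfl fun r _ => by ring
      rw [h1, hA p, Finset.sum_sub_distrib, Finset.sum_sub_distrib, Finset.sum_add_distrib,
        ← Finset.mul_sum, ← Finset.mul_sum]
      ring
    rw [Finset.sum_congr rfl h0]
    rw [Finset.sum_add_distrib, Finset.sum_add_distrib, Finset.sum_sub_distrib,
      Finset.sum_sub_distrib]
    have hsw : ∑ p ∈ U, ∑ r ∈ U, dInB n d V r * X p r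
        = ∑ r ∈ U, dInB n d V r * ∑ p ∈ U, X p r := by
      rw [Finset.sum_comm]
      exact Finset.sum_congr rfl fun r _ => by rw [Finset.mul_sum]
    have t1 : ∑ x ∈ U, ((∑ r ∈ U, dInB n d V r) - (n : ℝ) / 2 * e) * X x x
        = ((∑ r ∈ U, dInB n d V r) - (n : ℝ) / 2 * e) * ∑ p ∈ U, X p p := by
      rw [Finset.mul_sum]
    have t2 : ∑ x ∈ U, e * ∑ r ∈ U, X x r = e * ∑ p ∈ U, ∑ r ∈ U, X p r := by
      rw [Finset.mul_sum]
    rw [hsw, t1, t2]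
  have hP2 : ∀ (U V : Finset (Fin n)),
      ((U.card : ℝ) = (n : ℝ) / 2) →
      ∑ p ∈ U, ∑ k ∈ V, ((2 / (n : ℝ)) * ∑ r ∈ U, (d p k + dInB n d U r - d r k - dInB n d U p)) * X p k
      = (∑ p ∈ U, ∑ k ∈ V, d p k * X p k)
        - (∑ p ∈ U, dInB n d U p * ∑ k ∈ V, X p k)
        - (∑ k ∈ V, dInB n d U k * ∑ p ∈ U, X p k)
        + (2 / (n : ℝ)) * (∑ r ∈ U, dInB n d U r) * (∑ p ∈ U, ∑ k ∈ V, X p k) := by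
    intro U V hcU
    have h22' : (2 / (n : ℝ)) * ((n : ℝ) / 2) = 1 := by field_simp
    have hC : ∀ p k : Fin n, (2 / (n : ℝ)) * ∑ r ∈ U, (d p k + dInB n d U r - d r k - dInB n d U p)
        = d p k - dInB n d U p - dInB n d U k
          + (2 / (n : ℝ)) * (∑ r ∈ U, dInB n d U r) := by
      intro p k
      rw [Finset.sum_sub_distrib, Finset.sum_sub_distrib, Finset.sum_add_distrib,
        Finset.sum_const, Finset.sum_const, nsmul_eq_mul, nsmul_eq_mul, hsumdc U k, hcU]
      linear_combination (d p k - dInB n d U p - dInB n d U k) * h22'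
    have h0 : ∀ p ∈ U, ∑ k ∈ V, ((2 / (n : ℝ)) * ∑ r ∈ U, (d p k + dInB n d U r - d r k - dInB n d U p)) * X p k
        = (∑ k ∈ V, d p k * X p k)
          - dInB n d U p * (∑ k ∈ V, X p k)
          - (∑ k ∈ V, dInB n d U k * X p k)
          + ((2 / (n : ℝ)) * (∑ r ∈ U, dInB n d U r)) * (∑ k ∈ V, X p k) := by
      intro p _
      have h1 : ∑ k ∈ V, ((2 / (n : ℝ)) * ∑ r ∈ U, (d p k + dInB n d U r - d r k - dInB n d U p)) * X p k
          = ∑ k ∈ V, (d p k * X p k - dInB n d U p * X p k - dInB n d U k * X p k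
              + ((2 / (n : ℝ)) * (∑ r ∈ U, dInB n d U r)) * X p k) := by
        refine Finset.sum_congr rfl fun k _ => ?_
        rw [hC p k]
        ring
      rw [h1, Finset.sum_add_distrib, Finset.sum_sub_distrib, Finset.sum_sub_distrib,
        ← Finset.mul_sum, ← Finset.mul_sum]
    rw [Finset.sum_congr rfl h0]
    rw [Finset.sum_add_distrib, Finset.sum_sub_distrib, Finset.sum_sub_distrib]
    have hsw : ∑ p ∈ U, ∑ k ∈ V, dInB n d U k * X p k
        = ∑ k ∈ V, dInB n d U k * ∑ p ∈ U, X p k := by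
      rw [Finset.sum_comm]
      exact Finset.sum_congr rfl fun k _ => by rw [Finset.mul_sum]
    have t2 : ∑ p ∈ U, ((2 / (n : ℝ)) * (∑ r ∈ U, dInB n d U r)) * (∑ k ∈ V, X p k)
        = (2 / (n : ℝ)) * (∑ r ∈ U, dInB n d U r) * (∑ p ∈ U, ∑ k ∈ V, X p k) := by
      rw [← Finset.mul_sum]
    rw [hsw, t2]
  rw [blockPhi n d X S T e hsym hT, blockPhi n d X T S e hsym hS,
    hP1 S T hcS, hP1 T S hcT, hP2 S T hcS, hP2 T S hcT, hobj]
  linear_combination ha + hb + hcc + hdd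
    + ((∑ p ∈ T, X p p) - 1) * hDo
    + ((2 / (n : ℝ)) * (∑ i ∈ T, dInB n d T i) - e) * hrho
    + ((n : ℝ) / 2 * e - (∑ r ∈ S, dInB n d T r)) * htr2
    + (-e) * hRS + (-e) * hRT
    + ((2 / (n : ℝ)) * (∑ p ∈ S, ∑ k ∈ T, X p k) - 1) * he
    + (-(2 * e * (∑ p ∈ S, ∑ k ∈ T, X p k))) * (mul_inv_cancel₀ hn)

end Stmt11Aux

open Stmt11Aux in
theorem stmt11main (n : ℕ) (hn : 4 ≤ n) (hne : Even n) (d : Fin n → Fin n → ℝ)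
    (hsym : ∀ a b, d a b = d b a)
    (hcond : ∀ i j : Fin n, i ≠ j →
      ((i ∈ Cone n ∧ j ∈ Cone n) ∨ (i ∈ Ctwo n ∧ j ∈ Ctwo n)) →
      etaConst n d ≤
        (2 / (n : ℝ)) *
            (∑ k ∈ (if (i : ℕ) < n / 2 then Ctwo n else Cone n),
              min (d i k + din n d j) (d j k + din n d i))
          - d i j) :
    ∀ X : Fin n → Fin n → ℝ, LP2Feasible n X →
      ∑ i, ∑ j, d i j * plantedX n i j ≤ ∑ i, ∑ j, d i j * X i j := by
  intro X hX
  obtain ⟨hXs, htr, hrow, htri⟩ := hX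
  set S := Cone n with hSdef
  set T := Ctwo n with hTdef
  set e := etaConst n d with heta
  obtain ⟨κ, hκ⟩ := hne
  have hκ2 : 2 ≤ κ := by omega
  have hhalf : n / 2 = κ := by omega
  have hnR : (n : ℝ) ≠ 0 := by
    have : (0:ℕ) < n := by omega
    exact_mod_cast this.ne'
  have hκR : ((κ : ℕ) : ℝ) ≠ 0 := by
    have : (0:ℕ) < κ := by omega
    exact_mod_cast this.ne'
  have hnκ : (n : ℝ) = (κ : ℝ) + (κ : ℝ) := by
    rw [hκ]; push_cast; ring
  have hS1 : (2 / (n : ℝ)) * (S.card) = 1 := by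
    have h1 : S.card = κ := by
      rw [hSdef, cone_card, hhalf]
    rw [h1, hnκ]
    field_simp
    ring
  have hT1 : (2 / (n : ℝ)) * (T.card) = 1 := by
    have h1 : T.card = κ := by
      rw [hTdef, ctwo_card, hhalf]
      omega
    rw [h1, hnκ]
    field_simp
    ring
  have hdinS : ∀ i ∈ S, din n d i = dInB n d S i := by
    intro i hi
    unfold din dInB
    rw [if_pos (mem_Cone.mp hi)]
  have hdinT : ∀ i ∈ T, din n d i = dInB n d T i := by
    intro i hi
    unfold din dInB
    rw [if_neg (not_lt.mpr (mem_Ctwo.mp hi))]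
  have he : (n : ℝ) * e = (∑ i ∈ S, dInB n d S i) + ∑ i ∈ T, dInB n d T i := by
    rw [heta]
    unfold etaConst
    rw [Finset.sum_congr rfl hdinS, Finset.sum_congr rfl hdinT]
    field_simp
  have hsmS : ∀ p ∈ S, ∀ r ∈ S, p ≠ r → 0 ≤ smB n d S T e p r := by
    intro p hp r hr hpr
    have h := hcond p r hpr (Or.inl ⟨hp, hr⟩)
    rw [if_pos (mem_Cone.mp hp), hdinS r hr, hdinS p hp] at h
    unfold smB
    linarith
  have hsmT : ∀ p ∈ T, ∀ r ∈ T, p ≠ r → 0 ≤ smB n d T S e p r := by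
    intro p hp r hr hpr
    have h := hcond p r hpr (Or.inr ⟨hp, hr⟩)
    rw [if_neg (not_lt.mpr (mem_Ctwo.mp hp)), hdinT r hr, hdinT p hp] at h
    unfold smB
    linarith
  have hPhiS : 0 ≤ ∑ p ∈ S, ∑ r ∈ S, ∑ k ∈ T,
      lamB n d S T e p r k * (X p p + X r k - X p r - X p k) := by
    refine Finset.sum_nonneg fun p hp => Finset.sum_nonneg fun r hr =>
      Finset.sum_nonneg fun k hk => ?_
    by_cases hpr : p = r
    · subst hpr
      have h0 : X p p + X p k - X p p - X p k = 0 := by ring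
      rw [h0, mul_zero]
    · have hpk : p ≠ k := by
        intro hc
        subst hc
        have h1 := mem_Cone.mp hp
        have h2 := mem_Ctwo.mp hk
        omega
      have hrk : r ≠ k := by
        intro hc
        subst hc
        have h1 := mem_Cone.mp hr
        have h2 := mem_Ctwo.mp hk
        omega
      have hslack := htri p r k hpr hpk hrk
      exact mul_nonneg (lamB_nonneg n d S T e p r k (hsmS p hp r hr hpr)) (by linarith)
  have hPhiT : 0 ≤ ∑ p ∈ T, ∑ r ∈ T, ∑ k ∈ S,
      lamB n d T S e p r k * (X p p + X r k - X p r - X p k) := by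
    refine Finset.sum_nonneg fun p hp => Finset.sum_nonneg fun r hr =>
      Finset.sum_nonneg fun k hk => ?_
    by_cases hpr : p = r
    · subst hpr
      have h0 : X p p + X p k - X p p - X p k = 0 := by ring
      rw [h0, mul_zero]
    · have hpk : p ≠ k := by
        intro hc
        subst hc
        have h1 := mem_Ctwo.mp hp
        have h2 := mem_Cone.mp hk
        omega
      have hrk : r ≠ k := by
        intro hc
        subst hc
        have h1 := mem_Ctwo.mp hr
        have h2 := mem_Cone.mp hk
        omega
      have hslack := htri p r k hpr hpk hrk
      exact mul_nonneg (lamB_nonneg n d T S e p r k (hsmT p hp r hr hpr)) (by linarith)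
  have hplant : ∑ i, ∑ j, d i j * plantedX n i j
      = (∑ i ∈ S, dInB n d S i) + ∑ i ∈ T, dInB n d T i := by
    have hin : ∀ i : Fin n, ∑ j, d i j * plantedX n i j
        = (∑ j ∈ S, d i j * plantedX n i j) + ∑ j ∈ T, d i j * plantedX n i j := by
      intro i
      rw [← Finset.sum_union (cone_ctwo_disjoint n), cone_ctwo_union]
    have hSS : ∀ i ∈ S, ∑ j ∈ S, d i j * plantedX n i j = dInB n d S i := by
      intro i hi
      have h1 : ∀ j ∈ S, d i j * plantedX n i j = (2 / (n : ℝ)) * d i j := by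
        intro j hj
        unfold plantedX
        rw [if_pos (iff_of_true (mem_Cone.mp hi) (mem_Cone.mp hj))]
        ring
      rw [Finset.sum_congr rfl h1, ← Finset.mul_sum]
      rfl
    have hTT : ∀ i ∈ T, ∑ j ∈ T, d i j * plantedX n i j = dInB n d T i := by
      intro i hi
      have h1 : ∀ j ∈ T, d i j * plantedX n i j = (2 / (n : ℝ)) * d i j := by
        intro j hj
        unfold plantedX
        rw [if_pos (iff_of_false (not_lt.mpr (mem_Ctwo.mp hi)) (not_lt.mpr (mem_Ctwo.mp hj)))]
        ring
      rw [Finset.sum_congr rfl h1, ← Finset.mul_sum]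
      rfl
    have hST : ∀ i ∈ S, ∑ j ∈ T, d i j * plantedX n i j = 0 := by
      intro i hi
      refine Finset.sum_eq_zero fun j hj => ?_
      unfold plantedX
      rw [if_neg fun hiff => absurd (hiff.mp (mem_Cone.mp hi)) (not_lt.mpr (mem_Ctwo.mp hj)),
        mul_zero]
    have hTS : ∀ i ∈ T, ∑ j ∈ S, d i j * plantedX n i j = 0 := by
      intro i hi
      refine Finset.sum_eq_zero fun j hj => ?_
      unfold plantedX
      rw [if_neg fun hiff => absurd (mem_Cone.mp hj) (fun h => absurd (hiff.mpr h)
        (not_lt.mpr (mem_Ctwo.mp hi))), mul_zero]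
    calc ∑ i, ∑ j, d i j * plantedX n i j
        = ∑ i, ((∑ j ∈ S, d i j * plantedX n i j) + ∑ j ∈ T, d i j * plantedX n i j) :=
          Finset.sum_congr rfl fun i _ => hin i
      _ = (∑ i ∈ S, ((∑ j ∈ S, d i j * plantedX n i j) + ∑ j ∈ T, d i j * plantedX n i j))
          + ∑ i ∈ T, ((∑ j ∈ S, d i j * plantedX n i j) + ∑ j ∈ T, d i j * plantedX n i j) := by
          rw [← Finset.sum_union (cone_ctwo_disjoint n), cone_ctwo_union]
      _ = (∑ i ∈ S, dInB n d S i) + ∑ i ∈ T, dInB n d T i := by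
          have e1 : (∑ i ∈ S, ((∑ j ∈ S, d i j * plantedX n i j)
              + ∑ j ∈ T, d i j * plantedX n i j)) = ∑ i ∈ S, dInB n d S i :=
            Finset.sum_congr rfl fun i hi => by rw [hSS i hi, hST i hi, add_zero]
          have e2 : (∑ i ∈ T, ((∑ j ∈ S, d i j * plantedX n i j)
              + ∑ j ∈ T, d i j * plantedX n i j)) = ∑ i ∈ T, dInB n d T i :=
            Finset.sum_congr rfl fun i hi => by rw [hTS i hi, hTT i hi, zero_add]
          rw [e1, e2]
  have hgrand := grand n d X S T e hsym hXs (cone_ctwo_disjoint n) (cone_ctwo_union n)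
    hS1 hT1 hnR he htr hrow
  rw [hplant, ← he]
  linarith

open Stmt11Aux in
/-- if for every l ∈ {1,2} and all distinct i, j ∈ C_l one has
(2/n) ∑_{k ∉ C_l} min{d_{ik} + d^in_j, d_{jk} + d^in_i} − d_{ij} ≥ η, where
d_{ij} = ‖xⁱ − xʲ‖², then the planted ratio-cut matrix is an optimal solution of
LP2, i.e. its objective value is at most that of every feasible X. -/
theorem stmt11 (n m : ℕ) (hn : 4 ≤ n) (hne : Even n) (hm : 1 ≤ m)
    (x : Fin n → EuclideanSpace ℝ (Fin m))
    (hcond : ∀ i j : Fin n, i ≠ j →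
      ((i ∈ Cone n ∧ j ∈ Cone n) ∨ (i ∈ Ctwo n ∧ j ∈ Ctwo n)) →
      etaConst n (fun a b => ‖x a - x b‖ ^ 2) ≤
        (2 / (n : ℝ)) *
            (∑ k ∈ (if (i : ℕ) < n / 2 then Ctwo n else Cone n),
              min (‖x i - x k‖ ^ 2 + din n (fun a b => ‖x a - x b‖ ^ 2) j)
                  (‖x j - x k‖ ^ 2 + din n (fun a b => ‖x a - x b‖ ^ 2) i))
          - ‖x i - x j‖ ^ 2) :
    ∀ X : Fin n → Fin n → ℝ, LP2Feasible n X →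
      ∑ i, ∑ j, ‖x i - x j‖ ^ 2 * plantedX n i j ≤
        ∑ i, ∑ j, ‖x i - x j‖ ^ 2 * X i j := by
  exact stmt11main n hn hne (fun a b => ‖x a - x b‖ ^ 2)
    (fun a b => by show ‖x a - x b‖ ^ 2 = ‖x b - x a‖ ^ 2; rw [norm_sub_rev]) hcond
end

section
/- For every real Δ ≥ 2 and every u ∈ [−1, 1], one has √(1 − u²) ≤ (u + Δ) − (u + Δ)² / (4(u + Δ + 2)). -/
/-- for every real Δ ≥ 2 and every u ∈ [−1, 1],
√(1 − u²) ≤ (u + Δ) − (u + Δ)² / (4(u + Δ + 2)). -/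
theorem stmt18 (Δ u : ℝ) (hΔ : 2 ≤ Δ) (hu : u ∈ Set.Icc (-1 : ℝ) 1) :
    Real.sqrt (1 - u ^ 2) ≤ (u + Δ) - (u + Δ) ^ 2 / (4 * (u + Δ + 2)) := by
  obtain ⟨h1, h2⟩ := hu
  have ht1 : (1 : ℝ) ≤ u + Δ := by linarith
  have hd : (0 : ℝ) < 4 * (u + Δ + 2) := by linarith
  have hR : (u + Δ) - (u + Δ) ^ 2 / (4 * (u + Δ + 2))
      = (u + Δ) * (3 * (u + Δ) + 8) / (4 * (u + Δ + 2)) := by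
    field_simp; ring
  have hRnn : 0 ≤ (u + Δ) - (u + Δ) ^ 2 / (4 * (u + Δ + 2)) := by
    rw [hR]
    positivity
  have key : 1 - u ^ 2 ≤ ((u + Δ) - (u + Δ) ^ 2 / (4 * (u + Δ + 2))) ^ 2 := by
    rw [hR, div_pow, le_div_iff₀ (by positivity)]
    nlinarith [sq_nonneg (u + 1), sq_nonneg (u - 1), sq_nonneg (u + Δ - 1),
      mul_nonneg (mul_nonneg (sub_nonneg.2 h2) (by linarith : (0:ℝ) ≤ u + 1)) (sq_nonneg (u + Δ)),
      mul_nonneg (mul_nonneg (sub_nonneg.2 h2) (by linarith : (0:ℝ) ≤ u + 1)) (by linarith : (0:ℝ) ≤ u + Δ - 1),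
      sq_nonneg ((u + Δ) * (u + Δ + 2))]
  calc Real.sqrt (1 - u ^ 2)
      ≤ Real.sqrt (((u + Δ) - (u + Δ) ^ 2 / (4 * (u + Δ + 2))) ^ 2) := Real.sqrt_le_sqrt key
    _ = (u + Δ) - (u + Δ) ^ 2 / (4 * (u + Δ + 2)) := Real.sqrt_sq hRnn
end
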